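/- In a Banach lattice with strong unit e, a sequence (yₙ) is un-convergent to 0 if and only if it is norm convergent to 0; in fact ‖|yₙ| ∧ λe‖-convergence to 0 for some λ bounding the sequence suffices. -/

import Mathlib

open Filter

section Aux

variable {F : Type*} [NormedAddCommGroup F] [Lattice F] [HasSolidNorm F] [IsOrderedAddMonoid F]

lemma aux_inf_add_le {a b c : F} (hb : 0 ≤ b) (hac : 0 ≤ a ⊓ c) :
    (a + b) ⊓ c ≤ a ⊓ c + b ⊓ c := by
  have h1 : (a + b) ⊓ c ≤ a ⊓ c + b := by
    calc (a + b) ⊓ c ≤ (a + b) ⊓ (c + b) :=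
          inf_le_inf_left _ (le_add_of_nonneg_right hb)
      _ = a ⊓ c + b := by
          rw [add_comm a b, add_comm c b, ← add_inf, add_comm]
  have h2 : (a + b) ⊓ c ≤ a ⊓ c + c :=
    le_trans inf_le_right (le_add_of_nonneg_left hac)
  calc (a + b) ⊓ c ≤ (a ⊓ c + b) ⊓ (a ⊓ c + c) := le_inf h1 h2
    _ = a ⊓ c + b ⊓ c := (add_inf _ _ _).symm

lemma aux_inf_nsmul {m c : F} (hm : 0 ≤ m) (hc : 0 ≤ c) (h : m ⊓ c = 0) :
    ∀ n : ℕ, m ⊓ (n • c) = 0 := by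
  intro n
  induction n with
  | zero => simpa using inf_eq_right.mpr hm
  | succ k ih =>
      refine le_antisymm ?_ (le_inf hm (nsmul_nonneg hc _))
      have h1 : (k • c + c) ⊓ m ≤ (k • c) ⊓ m + c ⊓ m := by
        refine aux_inf_add_le hc ?_
        rw [inf_comm, ih]
      rw [succ_nsmul, inf_comm]
      calc (k • c + c) ⊓ m ≤ (k • c) ⊓ m + c ⊓ m := h1
        _ = 0 := by rw [inf_comm (k • c) m, ih, inf_comm, h, add_zero]

lemma aux_nonneg_of_nsmul {n : ℕ} (hn : n ≠ 0) {b : F} (h : 0 ≤ n • b) : 0 ≤ b := by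
  have hdecomp : n • b = n • b⁺ - n • b⁻ := by
    rw [← smul_sub, posPart_sub_negPart]
  have h1 : n • b⁻ ≤ n • b⁺ := by
    rw [hdecomp, sub_nonneg] at h; exact h
  have h2 : b⁻ ≤ n • b⁻ := by
    calc b⁻ = 1 • b⁻ := (one_nsmul _).symm
      _ ≤ n • b⁻ := nsmul_le_nsmul_left (negPart_nonneg b) (Nat.one_le_iff_ne_zero.mpr hn)
  have h3 : b⁻ ⊓ (n • b⁺) = 0 := by
    refine aux_inf_nsmul (negPart_nonneg b) (posPart_nonneg b) ?_ n
    rw [inf_comm]; exact posPart_inf_negPart_eq_zero b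
  have h4 : b⁻ = 0 := by
    rw [← h3, inf_eq_left.mpr (h2.trans h1)]
  rwa [← negPart_eq_zero]

variable [NormedSpace ℝ F]

lemma aux_rat_smul_nonneg {q : ℚ} (hq : 0 ≤ q) {a : F} (ha : 0 ≤ a) :
    0 ≤ (q : ℝ) • a := by
  refine aux_nonneg_of_nsmul (n := q.den) q.den_nz ?_
  have h1 : (q.den : ℕ) • ((q : ℝ) • a) = ((q.den : ℝ) * (q : ℝ)) • a := by
    rw [← Nat.cast_smul_eq_nsmul ℝ, smul_smul]
  have h2 : (q.den : ℝ) * (q : ℝ) = (q.num : ℝ) := by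
    rw [Rat.cast_def]
    field_simp
  have h3 : (q.num : ℝ) = ((q.num.toNat : ℕ) : ℝ) := by
    exact_mod_cast congrArg (Int.cast : ℤ → ℝ) (Int.toNat_of_nonneg (Rat.num_nonneg.mpr hq)).symm
  rw [h1, h2, h3, Nat.cast_smul_eq_nsmul]
  exact nsmul_nonneg ha _

lemma aux_smul_nonneg {c : ℝ} (hc : 0 ≤ c) {a : F} (ha : 0 ≤ a) : 0 ≤ c • a := by
  have hclosed : IsClosed {t : ℝ | 0 ≤ t • a} :=
    isClosed_nonneg.preimage (continuous_id.smul continuous_const)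
  have hq : ∀ n : ℕ, ∃ q : ℚ, c < (q : ℝ) ∧ (q : ℝ) < c + 1 / (n + 1) := by
    intro n
    exact exists_rat_btwn (lt_add_of_pos_right c (by positivity))
  choose q hq1 hq2 using hq
  have htend : Tendsto (fun n : ℕ => ((q n : ℝ))) atTop (nhds c) := by
    have hub : Tendsto (fun n : ℕ => c + 1 / ((n : ℝ) + 1)) atTop (nhds (c + 0)) :=
      tendsto_const_nhds.add tendsto_one_div_add_atTop_nhds_zero_nat
    rw [add_zero] at hub
    exact tendsto_of_tendsto_of_tendsto_of_le_of_le tendsto_const_nhds hub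
      (fun n => (hq1 n).le) (fun n => (hq2 n).le)
  have hmem : ∀ n, ((q n : ℝ)) • a ∈ {t : F | 0 ≤ t} := by
    intro n
    exact aux_rat_smul_nonneg (by exact_mod_cast (hc.trans_lt (hq1 n)).le) ha
  have : Tendsto (fun n : ℕ => ((q n : ℝ)) • a) atTop (nhds (c • a)) :=
    htend.smul_const a
  exact isClosed_nonneg.mem_of_tendsto this (Eventually.of_forall hmem)

lemma aux_smul_mono_vec {c : ℝ} (hc : 0 ≤ c) {x y : F} (h : x ≤ y) : c • x ≤ c • y := by
  have := aux_smul_nonneg hc (sub_nonneg.mpr h)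
  rwa [smul_sub, sub_nonneg] at this

lemma aux_smul_mono_scalar {c d : ℝ} (h : c ≤ d) {a : F} (ha : 0 ≤ a) : c • a ≤ d • a := by
  have := aux_smul_nonneg (sub_nonneg.mpr h) ha
  rwa [sub_smul, sub_nonneg] at this

lemma aux_abs_smul_le {c : ℝ} (hc : 0 ≤ c) (x : F) : |c • x| ≤ c • |x| := by
  rw [abs_le']
  constructor
  · exact aux_smul_mono_vec hc (le_abs_self x)
  · rw [← smul_neg]
    exact aux_smul_mono_vec hc (neg_le_abs x)

end Aux

lemma aux_inf_sup_le {α : Type*} [Lattice α] [AddCommGroup α]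
    [CovariantClass α α (· + ·) (· ≤ ·)] (u w v : α) :
    (u ⊔ w) ⊓ v ≤ (u ⊓ v) ⊔ (w ⊓ v) := by
  letI := AddCommGroup.toDistribLattice α
  exact (inf_sup_right u w v).le

section Main

variable {F : Type*} [NormedAddCommGroup F] [Lattice F] [HasSolidNorm F] [IsOrderedAddMonoid F] [NormedSpace ℝ F]

/-- Key order lemma: if `a ⊓ e ≤ ε • e` with `0 < ε < 1`, `0 ≤ a`, `a ≤ l • e`, then
`a ≤ ε • e`. -/
lemma aux_key (e : F) (he : 0 ≤ e) {ε : ℝ} (hε0 : 0 < ε) (hε1 : ε < 1)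
    {a : F} (ha : 0 ≤ a) {l : ℝ} (hl : 0 < l) (hale : a ≤ l • e)
    (h : a ⊓ e ≤ ε • e) : a ≤ ε • e := by
  set c : F := (1 - ε) • e with hc_def
  have hc : 0 ≤ c := aux_smul_nonneg (by linarith) he
  have hce : c = e - ε • e := by
    rw [hc_def, sub_smul, one_smul]
  have h0 : (a - ε • e) ⊓ c ≤ 0 := by
    rw [hce]
    have : (a - ε • e) ⊓ (e - ε • e) = a ⊓ e - ε • e := by
      rw [sub_eq_add_neg a, sub_eq_add_neg e, add_comm a, add_comm e, ← add_inf,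
        sub_eq_add_neg, add_comm]
    rw [this]
    exact sub_nonpos.mpr h
  set m : F := (a - ε • e)⁺ with hm_def
  have hm0 : m ⊓ c ≤ 0 := by
    calc m ⊓ c = ((a - ε • e) ⊔ 0) ⊓ c := by rw [hm_def, posPart_def]
      _ ≤ ((a - ε • e) ⊓ c) ⊔ (0 ⊓ c) := aux_inf_sup_le _ _ _
      _ ≤ 0 ⊔ 0 := sup_le_sup h0 inf_le_left
      _ = 0 := sup_idem 0
  have hm : m ⊓ c = 0 := le_antisymm hm0 (le_inf (posPart_nonneg _) hc)
  set n : ℕ := ⌈l / (1 - ε)⌉₊ with hn_def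
  have hlen : a ≤ n • c := by
    have h1 : l • e = (l / (1 - ε)) • c := by
      rw [hc_def, smul_smul, div_mul_cancel₀]
      linarith
    have h2 : (l / (1 - ε)) • c ≤ ((n : ℝ)) • c :=
      aux_smul_mono_scalar (Nat.le_ceil _) hc
    calc a ≤ l • e := hale
      _ = (l / (1 - ε)) • c := h1
      _ ≤ ((n : ℝ)) • c := h2
      _ = n • c := Nat.cast_smul_eq_nsmul ℝ n c
  have hma : m ≤ a := by
    have h3 : a - ε • e ≤ a := sub_le_self a (aux_smul_nonneg hε0.le he)
    calc m ≤ a⁺ := posPart_mono h3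
      _ = a := posPart_eq_self.mpr ha
  have hmzero : m = 0 := by
    have h4 : m ⊓ (n • c) = 0 := aux_inf_nsmul (posPart_nonneg _) hc hm n
    rw [← h4, inf_eq_left.mpr (hma.trans hlen)]
  have h5 : a - ε • e ≤ 0 := posPart_eq_zero.mp hmzero
  exact sub_nonpos.mp h5

/-- Baire-category norm domination by the strong unit. -/
lemma aux_exists_dom [CompleteSpace F] (e : F) (he : 0 ≤ e)
    (hunit : ∀ x : F, ∃ l : ℝ, 0 < l ∧ |x| ≤ l • e) :
    ∃ C : ℝ, 0 < C ∧ ∀ x : F, |x| ≤ (C * ‖x‖) • e := by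
  have habs : Continuous fun x : F => |x| := by
    have h : (fun x : F => |x|) = fun x => x⁺ + x⁻ :=
      funext fun x => (posPart_add_negPart x).symm
    rw [h]
    exact continuous_posPart.add continuous_negPart
  have hclosed : ∀ k : ℕ, IsClosed {x : F | |x| ≤ (k : ℝ) • e} := by
    intro k
    have h : {x : F | |x| ≤ (k : ℝ) • e} =
        (fun x : F => (k : ℝ) • e - |x|) ⁻¹' {z : F | 0 ≤ z} := by
      ext x; simp [sub_nonneg]
    rw [h]
    exact isClosed_nonneg.preimage (continuous_const.sub habs)
  have hcover : (⋃ k : ℕ, {x : F | |x| ≤ (k : ℝ) • e}) = Set.univ := by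
    refine Set.eq_univ_of_forall fun x => ?_
    obtain ⟨l, hl, hle⟩ := hunit x
    refine Set.mem_iUnion.mpr ⟨⌈l⌉₊, ?_⟩
    exact hle.trans (aux_smul_mono_scalar (Nat.le_ceil l) he)
  haveI : Nonempty F := ⟨0⟩
  obtain ⟨k, hk⟩ := nonempty_interior_of_iUnion_of_closed hclosed hcover
  obtain ⟨x₀, hx₀⟩ := hk
  obtain ⟨δ, hδ, hball⟩ := Metric.mem_nhds_iff.mp (mem_interior_iff_mem_nhds.mp hx₀)
  have hsmall : ∀ u : F, ‖u‖ < δ → |u| ≤ (k : ℝ) • e := by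
    intro u hu
    have h1 : |x₀ + u| ≤ (k : ℝ) • e := hball (by
      rw [Metric.mem_ball, dist_eq_norm]; simpa using hu)
    have h2 : |x₀ - u| ≤ (k : ℝ) • e := hball (by
      rw [Metric.mem_ball, dist_eq_norm]; simpa using hu)
    have h3 : |u + u| ≤ (k : ℝ) • e + (k : ℝ) • e := by
      have heq : u + u = (x₀ + u) - (x₀ - u) := by abel
      calc |u + u| = |(x₀ + u) + -(x₀ - u)| := by rw [← sub_eq_add_neg, ← heq]
        _ ≤ |x₀ + u| + |-(x₀ - u)| := abs_add_le (x₀ + u) (-(x₀ - u))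
        _ = |x₀ + u| + |x₀ - u| := by rw [abs_neg]
        _ ≤ (k : ℝ) • e + (k : ℝ) • e := add_le_add h1 h2
    have h4 : ((1 : ℝ) / 2) • (u + u) = u := by
      rw [← two_smul ℝ u, smul_smul]; norm_num
    calc |u| = |((1 : ℝ) / 2) • (u + u)| := by rw [h4]
      _ ≤ ((1 : ℝ) / 2) • |u + u| := aux_abs_smul_le (by norm_num) _
      _ ≤ ((1 : ℝ) / 2) • ((k : ℝ) • e + (k : ℝ) • e) :=
          aux_smul_mono_vec (by norm_num) h3
      _ = (k : ℝ) • e := by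
          rw [← add_smul, smul_smul]; congr 1; ring
  refine ⟨2 * ((k : ℝ) + 1) / δ, by positivity, fun x => ?_⟩
  by_cases hx : x = 0
  · simp [hx]
  · have hnx : 0 < ‖x‖ := norm_pos_iff.mpr hx
    set t : ℝ := δ / (2 * ‖x‖) with ht_def
    have ht : 0 < t := by positivity
    have hnorm : ‖t • x‖ < δ := by
      have htx : t * ‖x‖ = δ / 2 := by
        rw [ht_def]; field_simp
      rw [norm_smul, Real.norm_of_nonneg ht.le, htx]
      linarith
    have h5 : |t • x| ≤ (k : ℝ) • e := hsmall _ hnorm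
    have h6 : x = (1 / t) • (t • x) := by
      rw [smul_smul, one_div, inv_mul_cancel₀ ht.ne', one_smul]
    calc |x| = |(1 / t) • (t • x)| := by rw [← h6]
      _ ≤ (1 / t) • |t • x| := aux_abs_smul_le (by positivity) _
      _ ≤ (1 / t) • ((k : ℝ) • e) := aux_smul_mono_vec (by positivity) h5
      _ = ((k : ℝ) / t) • e := by rw [smul_smul]; congr 1; ring
      _ ≤ (2 * ((k : ℝ) + 1) / δ * ‖x‖) • e := by
          refine aux_smul_mono_scalar ?_ he
          rw [ht_def, div_div_eq_mul_div, div_le_iff₀ hδ]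
          have h7 : 2 * ((k : ℝ) + 1) / δ * ‖x‖ * δ = 2 * ((k : ℝ) + 1) * ‖x‖ := by
            field_simp
          rw [h7]
          nlinarith [hnx, (Nat.cast_nonneg k : (0:ℝ) ≤ k)]

end Main

/-- A sequence in a normed lattice is unbounded norm (un-) convergent to `0`. -/
def UnNullSeq {F : Type*} [NormedAddCommGroup F] [Lattice F] [HasSolidNorm F] [IsOrderedAddMonoid F] (y : ℕ → F) : Prop :=
  ∀ w : F, 0 ≤ w → Tendsto (fun n => ‖|y n| ⊓ w‖) atTop (nhds 0)

/-- in a Banach lattice with a strong unit `e`, a sequence is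
un-convergent to `0` iff it is norm convergent to `0`; in fact, for any `l > 0`
bounding the sequence (`|yₙ| ≤ l • e`), `‖|yₙ| ∧ l • e‖ → 0` already implies
norm convergence to `0`. -/
theorem unNull_iff_normNull_of_strongUnit
    {F : Type*} [NormedAddCommGroup F] [Lattice F] [HasSolidNorm F] [IsOrderedAddMonoid F] [NormedSpace ℝ F] [CompleteSpace F]
    (e : F) (he : 0 ≤ e) (hunit : ∀ x : F, ∃ l : ℝ, 0 < l ∧ |x| ≤ l • e)
    (y : ℕ → F) :
    (UnNullSeq y ↔ Tendsto (fun n => ‖y n‖) atTop (nhds 0)) ∧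
    (∀ l : ℝ, 0 < l → (∀ n, |y n| ≤ l • e) →
      Tendsto (fun n => ‖|y n| ⊓ l • e‖) atTop (nhds 0) →
      Tendsto (fun n => ‖y n‖) atTop (nhds 0)) := by
  constructor
  · constructor
    · -- un-null implies norm null
      intro hun
      obtain ⟨C, hC, hdom⟩ := aux_exists_dom e he hunit
      rw [Metric.tendsto_atTop]
      intro η hη
      set ε : ℝ := min (1/2) (η / (2 * (‖e‖ + 1))) with hε_def
      have hε0 : 0 < ε := lt_min (by norm_num) (by positivity)
      have hε1 : ε < 1 := lt_of_le_of_lt (min_le_left _ _) (by norm_num)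
      have hεη : ε * ‖e‖ < η := by
        have h1 : ε ≤ η / (2 * (‖e‖ + 1)) := min_le_right _ _
        have h2 : ε * ‖e‖ ≤ η / (2 * (‖e‖ + 1)) * ‖e‖ :=
          mul_le_mul_of_nonneg_right h1 (norm_nonneg e)
        have h3 : η / (2 * (‖e‖ + 1)) * ‖e‖ < η := by
          rw [div_mul_eq_mul_div, div_lt_iff₀ (by positivity)]
          nlinarith [norm_nonneg e]
        linarith
      obtain ⟨N, hN⟩ := (Metric.tendsto_atTop.mp (hun e he)) (ε / C)
        (by positivity)
      refine ⟨N, fun n hn => ?_⟩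
      have hz0 : (0 : F) ≤ |y n| ⊓ e := le_inf (abs_nonneg _) he
      have hznorm : ‖|y n| ⊓ e‖ < ε / C := by
        have := hN n hn
        rwa [Real.dist_eq, sub_zero, abs_of_nonneg (norm_nonneg _)] at this
      have hz1 : |y n| ⊓ e ≤ ε • e := by
        have h4 : |y n| ⊓ e ≤ (C * ‖|y n| ⊓ e‖) • e := by
          have := hdom (|y n| ⊓ e)
          rwa [abs_of_nonneg hz0] at this
        refine h4.trans (aux_smul_mono_scalar ?_ he)
        rw [mul_comm]
        exact (lt_div_iff₀ hC).mp hznorm |>.le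
      obtain ⟨l, hl, hle⟩ := hunit (y n)
      have hkey : |y n| ≤ ε • e :=
        aux_key e he hε0 hε1 (abs_nonneg _) hl hle hz1
      have h5 : ‖y n‖ ≤ ε * ‖e‖ := by
        rw [← norm_abs_eq_norm (y n)]
        calc ‖|y n|‖ ≤ ‖ε • e‖ := by
              refine norm_le_norm_of_abs_le_abs ?_
              rw [abs_abs, abs_of_nonneg (aux_smul_nonneg hε0.le he)]
              exact hkey
          _ = ε * ‖e‖ := by rw [norm_smul, Real.norm_of_nonneg hε0.le]
      rw [Real.dist_eq, sub_zero, abs_of_nonneg (norm_nonneg _)]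
      exact lt_of_le_of_lt h5 hεη
    · -- norm null implies un-null
      intro hnorm w hw
      refine squeeze_zero (fun n => norm_nonneg _) (fun n => ?_) hnorm
      refine norm_le_norm_of_abs_le_abs ?_
      rw [abs_of_nonneg (le_inf (abs_nonneg _) hw)]
      exact inf_le_left
  · intro l hl hb h
    have heq : (fun n => ‖|y n| ⊓ l • e‖) = fun n => ‖y n‖ := by
      funext n
      rw [inf_eq_left.mpr (hb n), norm_abs_eq_norm]
    rwa [heq] at h
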